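/- For all u₁, u₂, u₃ ∈ ℂ, the sl(3) Lax matrix admits the factorization L(u₁,u₂,u₃) = M₋ · U · M₊, an identity of 3×3 matrices of ℂ-linear endomorphisms of ℂ[x,y,z], where M₋ = [[1,0,0],[−x,1,0],[−y,−z,1]], U = [[u₁, ∂ₓ−z∂_y, ∂_y],[0, u₂, ∂_z],[0,0,u₃]], M₊ = [[1,0,0],[x,1,0],[y+xz, z, 1]], and L(u₁,u₂,u₃) is the matrix with entries L₁₁ = x∂ₓ+y∂_y+u₁+2, L₁₂ = ∂ₓ, L₁₃ = ∂_y, L₂₁ = −x²∂ₓ − xy∂_y + (xz+y)∂_z + (u₂−u₁−1)x, L₂₂ = −x∂ₓ+z∂_z+u₂+1, L₂₃ = ∂_z−x∂_y, L₃₁ = −xy∂ₓ − y²∂_y − z(xz+y)∂_z + (u₃−u₂−1)xz + (u₃−u₁−2)y, L₃₂ = −y∂ₓ − z²∂_z + (u₃−u₂−1)z, L₃₃ = −y∂_y−z∂_z+u₃. -/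

import Mathlib

open MvPolynomial

/-- The endomorphism ring of `ℂ[x,y,z]` (variables `x = X 0`, `y = X 1`, `z = X 2`). -/
abbrev E3 : Type := Module.End ℂ (MvPolynomial (Fin 3) ℂ)

/-- Multiplication operators `x, y, z` on `ℂ[x,y,z]`. -/
noncomputable def Zm (i : Fin 3) : E3 := LinearMap.mulLeft ℂ (X i)

/-- Partial derivatives `∂ₓ, ∂_y, ∂_z` on `ℂ[x,y,z]`. -/
noncomputable def Dm (i : Fin 3) : E3 := (pderiv i).toLinearMap

/-- The `sl(3)` Lax matrix `L(u₁,u₂,u₃)`. -/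
noncomputable def L3 (u₁ u₂ u₃ : ℂ) : Matrix (Fin 3) (Fin 3) E3 :=
  !![Zm 0 * Dm 0 + Zm 1 * Dm 1 + (u₁ + 2) • 1, Dm 0, Dm 1;
     -(Zm 0 * Zm 0 * Dm 0) - Zm 0 * Zm 1 * Dm 1 + (Zm 0 * Zm 2 + Zm 1) * Dm 2
         + (u₂ - u₁ - 1) • Zm 0,
       -(Zm 0 * Dm 0) + Zm 2 * Dm 2 + (u₂ + 1) • 1,
       Dm 2 - Zm 0 * Dm 1;
     -(Zm 0 * Zm 1 * Dm 0) - Zm 1 * Zm 1 * Dm 1 - Zm 2 * (Zm 0 * Zm 2 + Zm 1) * Dm 2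
         + (u₃ - u₂ - 1) • (Zm 0 * Zm 2) + (u₃ - u₁ - 2) • Zm 1,
       -(Zm 1 * Dm 0) - Zm 2 * Zm 2 * Dm 2 + (u₃ - u₂ - 1) • Zm 2,
       -(Zm 1 * Dm 1) - Zm 2 * Dm 2 + u₃ • 1]

set_option maxHeartbeats 4000000

/-- Factorization of the `sl(3)` Lax matrix: `L(u₁,u₂,u₃) = M₋ · U · M₊` with
`M₋ = [[1,0,0],[−x,1,0],[−y,−z,1]]`, `U = [[u₁, ∂ₓ−z∂_y, ∂_y],[0,u₂,∂_z],[0,0,u₃]]`,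
`M₊ = [[1,0,0],[x,1,0],[y+xz,z,1]]`. -/
theorem sl3_lax_factorization (u₁ u₂ u₃ : ℂ) :
    L3 u₁ u₂ u₃ =
      !![(1 : E3), 0, 0; -Zm 0, 1, 0; -Zm 1, -Zm 2, 1] *
      !![u₁ • 1, Dm 0 - Zm 2 * Dm 1, Dm 1; 0, u₂ • 1, Dm 2; 0, 0, u₃ • 1] *
      !![(1 : E3), 0, 0; Zm 0, 1, 0; Zm 1 + Zm 0 * Zm 2, Zm 2, 1] := by
  rw [Matrix.mul_fin_three, Matrix.mul_fin_three]
  ext i j p : 3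
  fin_cases i <;> fin_cases j <;>
    simp [L3, Zm, Dm, pderiv_mul, Pi.single_apply, mul_add, add_mul, smul_eq_C_mul, map_ofNat] <;>
    ring
  all_goals
    have h2 : (2 : MvPolynomial (Fin 3) ℂ) = C 2 := (map_ofNat C 2).symm
    rw [h2]
    simp only [MvPolynomial.single_eq_monomial]
    rw [mul_comm _ (C 2), MvPolynomial.C_mul_monomial, mul_one]
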